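/- If two lists I = (i₁,…,iₙ) and J = (j₁,…,jₙ) of distinct integers have the same ordering, i.e. i_k < i_l if and only if j_k < j_l for all k, l ∈ {1,…,n}, then φ(I) = φ(J). -/

import Mathlib

/-- The minimum of `a :: l` (computed by folding `min`) is a member of `a :: l`. -/
lemma foldr_min_mem (a : ℤ) : ∀ l : List ℤ, l.foldr min a ∈ a :: l := by
  intro l
  induction l with
  | nil => simp
  | cons b l ih =>
    simp only [List.foldr_cons]
    rcases min_choice b (l.foldr min a) with h | h
    · rw [h]; simp
    · rw [h]
      rcases List.mem_cons.mp ih with h' | h'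
      · simp [h']
      · simp [h']

/-- The planar binary tree `φ(I)` associated to a list `I` of (distinct) integers:
`φ` of the empty list is the empty tree `|`, and `φ(I) = φ(I₁) ∨ φ(I₂)` where
`I = I₁ · (min I) · I₂` is the splitting of `I` at its minimal entry. -/
def phi : List ℤ → Tree Unit
  | [] => Tree.nil
  | a :: l =>
    Tree.node ()
      (phi ((a :: l).take ((a :: l).idxOf (l.foldr min a))))
      (phi ((a :: l).drop ((a :: l).idxOf (l.foldr min a) + 1)))
termination_by l => l.length
decreasing_by
  · have hm := foldr_min_mem a l
    have hk := List.idxOf_lt_length_iff.mpr hm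
    simp only [List.length_take, List.length_cons] at *
    first
      | omega
      | (simp only [List.foldr_attach] at *; omega)
      | (simp [List.foldr_attach] at *; omega)
  · simp only [List.length_drop, List.length_cons]
    omega

/-- The standardization of a list `I` of distinct integers: the list whose `j`-th entry is
the (1-indexed) position of `I_j` in the increasing ordering of the entries of `I`. -/
def stdz (I : List ℤ) : List ℤ :=
  I.map (fun x => ((I.filter (fun y => y < x)).length : ℤ) + 1)

/-- `l` is (the list of values of) a permutation of `{1, …, n}`. -/
def IsPermList (n : ℕ) (l : List ℤ) : Prop :=
  l.Perm ((List.range n).map (fun k => (k : ℤ) + 1))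

/-- `S_T`: the set of permutations `σ ∈ S_{|T|}` (identified with their lists of values
`(σ(1),…,σ(n))`) such that `φ(σ) = T`. -/
def STree (T : Tree Unit) : Set (List ℤ) :=
  {l | IsPermList T.numNodes l ∧ phi l = T}


lemma foldr_min_le (a : ℤ) (l : List ℤ) : ∀ x ∈ a :: l, l.foldr min a ≤ x := by
  induction l generalizing a with
  | nil => simp
  | cons b l ih =>
    intro x hx
    simp only [List.foldr_cons]
    rcases List.mem_cons.mp hx with h | h
    · subst h
      exact le_trans (min_le_right _ _) (ih x x (by simp))
    rcases List.mem_cons.mp h with h | h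
    · subst h; exact min_le_left _ _
    · exact le_trans (min_le_right _ _) (ih a x (by simp [h]))

lemma phi_aux (n : ℕ) : ∀ I J : List ℤ, I.length ≤ n → I.Nodup → J.Nodup →
    ∀ (hlen : I.length = J.length),
    (∀ i j : ℕ, ∀ hi : i < I.length, ∀ hj : j < I.length,
      (I[i] < I[j] ↔ J[i]'(hlen ▸ hi) < J[j]'(hlen ▸ hj))) →
    phi I = phi J := by
  induction n with
  | zero =>
    intro I J hn _ _ hlen _
    have h1 : I = [] := List.eq_nil_of_length_eq_zero (by omega)
    have h2 : J = [] := List.eq_nil_of_length_eq_zero (by omega)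
    simp [h1, h2]
  | succ n ih =>
    intro I J hn hI hJ hlen h
    match I, J with
    | [], [] => rfl
    | [], b :: m => simp at hlen
    | a :: l, [] => simp at hlen
    | a :: l, b :: m =>
      set I := a :: l with hIdef
      set J := b :: m with hJdef
      have hmImem : l.foldr min a ∈ I := foldr_min_mem a l
      have hmJmem : m.foldr min b ∈ J := foldr_min_mem b m
      have hkI : I.idxOf (l.foldr min a) < I.length := List.idxOf_lt_length_iff.mpr hmImem
      set k := I.idxOf (l.foldr min a) with hkdef
      have hgetI : I.get ⟨k, hkI⟩ = l.foldr min a := List.idxOf_get hkI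
      have hkJ : k < J.length := by omega
      have hJk_le : ∀ j : ℕ, ∀ hj : j < J.length, J[k] ≤ J[j] := by
        intro j hj
        by_contra hc
        push_neg at hc
        have h1 : I[j]'(by omega) < I[k] := (h j k (by omega) (by omega)).mpr hc
        have hle : I[k] ≤ I[j]'(by omega) := by
          rw [show I[k] = l.foldr min a from hgetI]
          exact foldr_min_le a l _ (List.getElem_mem _)
        omega
      have hJget : J[k] = m.foldr min b := by
        obtain ⟨⟨j, hj⟩, hjeq⟩ := List.mem_iff_get.mp hmJmem
        refine le_antisymm ?_ (foldr_min_le b m _ (List.getElem_mem _))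
        rw [← hjeq]
        exact hJk_le j hj
      have hkJeq : J.idxOf (m.foldr min b) = k := by
        rw [← hJget]
        exact List.get_idxOf hJ ⟨k, hkJ⟩
      rw [hIdef, hJdef, phi, phi]
      rw [← hIdef, ← hJdef, ← hkdef, hkJeq]
      congr 1
      · apply ih
        · simp only [List.length_take]; omega
        · exact (List.take_sublist _ _).nodup hI
        · exact (List.take_sublist _ _).nodup hJ
        · intro i j hi hj
          simp only [List.getElem_take]
          simp only [List.length_take] at hi hj
          exact h i j (by omega) (by omega)
        · simp only [List.length_take]; omega
      · apply ih
        · simp only [List.length_drop]; omega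
        · exact (List.drop_sublist _ _).nodup hI
        · exact (List.drop_sublist _ _).nodup hJ
        · intro i j hi hj
          simp only [List.getElem_drop]
          simp only [List.length_drop] at hi hj
          exact h _ _ (by omega) (by omega)
        · simp only [List.length_drop]; omega

/-- If two lists `I` and `J` of distinct integers have the same length and the same
ordering (i.e. `I_k < I_l ↔ J_k < J_l` for all indices `k, l`), then `φ(I) = φ(J)`. -/
theorem phi_eq_of_same_ordering (I J : List ℤ) (hI : I.Nodup) (hJ : J.Nodup)
    (hlen : I.length = J.length)
    (h : ∀ k l : Fin I.length,
      I.get k < I.get l ↔ J.get (Fin.cast hlen k) < J.get (Fin.cast hlen l)) :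
    phi I = phi J := by
  apply phi_aux I.length I J le_rfl hI hJ hlen
  intro i j hi hj
  simpa using h ⟨i, hi⟩ ⟨j, hj⟩
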